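/- Let (a_n) be an arithmetic sequence and (u_n) an increasing sequence of positive integers with u_n = a_{k_n} v_n, where k_n → ∞ and b_{k_n + 1} does not divide v_n for any n. Let (s_i) be an increasing sequence of indices such that a_{k_{s_{i+1}}} ≥ 8 u_{s_i} for all i. Then there exist integers m_t with 1 < m_t ≤ b_t such that the element x ∈ T whose canonical digits are c_t = ⌊b_t/m_t⌋ for t ∈ {k_{s_i} + 1 : i ∈ ℕ} and c_t = 0 otherwise (so supp(x) = {k_{s_i} + 1 : i ∈ ℕ}) satisfies x ∉ t_{(u_n)}(T). -/

import Mathlib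

open Filter Topology Set

noncomputable section

/-- The sequence of ratios `b n = a n / a (n-1)` of an arithmetic sequence. -/
def ratios (a : ℕ → ℕ) (n : ℕ) : ℕ := a n / a (n - 1)

/-- An arithmetic sequence: `a 0 = 1`, strictly increasing, each term divides the next. -/
def IsArithSeq (a : ℕ → ℕ) : Prop :=
  a 0 = 1 ∧ (∀ n, a n < a (n + 1)) ∧ (∀ n, a n ∣ a (n + 1))

/-- The indices `n_k` with `a k = d (n k)`: `n 0 = 1`, `n (k+1) = n k + (b (k+1) - 1)`. -/
def nseq (a : ℕ → ℕ) : ℕ → ℕ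
  | 0 => 1
  | k + 1 => nseq a k + (ratios a (k + 1) - 1)

/-- The lifting function `L(A) = ⋃_{k ∈ A} [n_{k-1}, n_k - 1]`. -/
def liftSet (a : ℕ → ℕ) (A : Set ℕ) : Set ℕ :=
  ⋃ k ∈ A, Set.Icc (nseq a (k - 1)) (nseq a k - 1)

/-- `A ⊆ ℕ` has natural density `δ`. -/
def HasDensity (A : Set ℕ) (δ : ℝ) : Prop :=
  Tendsto (fun n : ℕ => ((A ∩ Set.Iio n).ncard : ℝ) / n) atTop (𝓝 δ)

/-- The upper natural density of `A ⊆ ℕ`. -/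
def upperDensity (A : Set ℕ) : ℝ :=
  limsup (fun n : ℕ => ((A ∩ Set.Iio n).ncard : ℝ) / n) atTop

/-- The sequence `(d n)`: the increasing enumeration of `{r * a k : k ≥ 0, 1 ≤ r < b (k+1)}`. -/
def dSeq (a : ℕ → ℕ) : ℕ → ℕ :=
  Nat.nth (fun m => ∃ k r : ℕ, 1 ≤ r ∧ r < ratios a (k + 1) ∧ m = r * a k)

/-- The characterized subgroup `t_{(u n)}(𝕋)`. -/
def charSub (u : ℕ → ℤ) : Set (AddCircle (1 : ℝ)) :=
  {x | Tendsto (fun n => u n • x) atTop (𝓝 0)}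

/-- The statistically characterized subgroup `t^s_{(u n)}(𝕋)`. -/
def statChar (u : ℕ → ℤ) : Set (AddCircle (1 : ℝ)) :=
  {x | ∀ ε : ℝ, 0 < ε → HasDensity {n : ℕ | ε ≤ ‖u n • x‖} 0}

/-- Density lifting invariant. -/
def Dli (a : ℕ → ℕ) : Prop :=
  ∀ A : Set ℕ, A.Infinite → HasDensity A 0 → HasDensity (liftSet a A) 0

/-- Weakly density lifting invariant. -/
def WeaklyDli (a : ℕ → ℕ) : Prop :=
  ∃ A : Set ℕ, A.Infinite ∧ ∀ m : ℕ, HasDensity (liftSet a ((fun x => x - m) '' A)) 0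

/-- Strongly non density lifting invariant. -/
def StronglyNonDli (a : ℕ → ℕ) : Prop :=
  ∀ A : Set ℕ, A.Infinite → 0 < upperDensity (liftSet a A)

lemma abs_sub_int_ge (z : ℤ) (r : ℝ) (h1 : 1/4 ≤ r) (h2 : r ≤ 23/28) :
    5/28 ≤ |r - z| := by
  rcases le_or_gt (z : ℝ) 0 with h | h
  · calc (5/28 : ℝ) ≤ r - z := by linarith
    _ ≤ |r - z| := le_abs_self _
  · have hz : (1 : ℤ) ≤ z := by exact_mod_cast Int.cast_pos.mp h
    have hz1 : (1 : ℝ) ≤ z := by exact_mod_cast hz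
    calc (5/28 : ℝ) ≤ (z : ℝ) - r := by linarith
    _ ≤ |r - z| := by rw [abs_sub_comm]; exact le_abs_self _


lemma key_m (b w : ℕ) (hb : 2 ≤ b) (hw1 : 1 ≤ w) (hw2 : w < b) :
    ∃ m : ℕ, 1 < m ∧ m ≤ b ∧ ∃ z : ℤ,
      (1/4 : ℝ) ≤ ((w * (b / m) : ℕ) : ℝ) / b - z ∧
      ((w * (b / m) : ℕ) : ℝ) / b - z ≤ 3/4 := by
  have hbnat : 0 < b := by omega
  have hb0 : (0 : ℝ) < b := by exact_mod_cast hbnat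
  by_cases h1 : 4 * w ≤ b
  · -- m = 2w
    have hA : (b / (2*w)) * (2*w) ≤ b := Nat.div_mul_le_self b (2*w)
    have hB : 2*w * (b / (2*w)) + b % (2*w) = b := Nat.div_add_mod b (2*w)
    have hC : b % (2*w) < 2*w := Nat.mod_lt _ (by omega)
    refine ⟨2 * w, by omega, by omega, 0, ?_, ?_⟩ <;>
    · set q := b / (2*w) with hq
      have hA' : (q : ℝ) * (2*w) ≤ b := by exact_mod_cast hA
      have hB' : (b : ℝ) < 2*w*q + 2*w := by
        have : b < 2*w*q + 2*w := by omega
        exact_mod_cast this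
      have h1' : 4 * (w : ℝ) ≤ b := by exact_mod_cast h1
      push_cast
      rw [sub_zero]
      first
      | (rw [le_div_iff₀ hb0]; nlinarith)
      | (rw [div_le_iff₀ hb0]; nlinarith)
  · by_cases h2 : 4 * (b - w) ≤ b
    · -- m = 2(b-w)
      set w' := b - w with hw'
      have hww : w + w' = b := by omega
      have hw'1 : 1 ≤ w' := by omega
      have hA : (b / (2*w')) * (2*w') ≤ b := Nat.div_mul_le_self b (2*w')
      have hB : 2*w' * (b / (2*w')) + b % (2*w') = b := Nat.div_add_mod b (2*w')
      have hC : b % (2*w') < 2*w' := Nat.mod_lt _ (by omega)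
      set q := b / (2*w') with hq
      refine ⟨2 * w', by omega, by omega, (q : ℤ) - 1, ?_, ?_⟩ <;>
      · have hA' : (q : ℝ) * (2*w') ≤ b := by exact_mod_cast hA
        have hB' : (b : ℝ) < 2*w'*q + 2*w' := by
          have : b < 2*w'*q + 2*w' := by omega
          exact_mod_cast this
        have h2' : 4 * (w' : ℝ) ≤ b := by exact_mod_cast h2
        have hwr : (w : ℝ) = b - w' := by
          have h := hww
          have : ((w : ℝ) + (w' : ℝ)) = b := by exact_mod_cast h
          linarith
        push_cast
        rw [hwr]
        have hid : ((b : ℝ) - w') * q / b - ((q : ℝ) - 1) = 1 - w' * q / b := by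
          field_simp
          ring
        rw [hid]
        have hlow : (1/4 : ℝ) ≤ w' * q / b := by
          rw [le_div_iff₀ hb0]; nlinarith
        have hhigh : (w' : ℝ) * q / b ≤ 1/2 := by
          rw [div_le_iff₀ hb0]; nlinarith
        linarith
    · -- m = b
      have hd : b / b = 1 := Nat.div_self hbnat
      refine ⟨b, by omega, le_refl _, 0, ?_, ?_⟩ <;>
      · rw [hd]
        have h1' : (b : ℝ) < 4 * w := by exact_mod_cast (by omega : b < 4 * w)
        have h2' : (b : ℝ) < 4 * (b - w : ℕ) := by exact_mod_cast (by omega : b < 4 * (b - w))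
        have h2'' : (4 : ℝ) * w < 3 * b := by
          have : ((b - w : ℕ) : ℝ) = b - w := by
            have : w ≤ b := by omega
            push_cast [this]; ring
          rw [this] at h2'; linarith
        push_cast
        rw [sub_zero]
        first
        | (rw [le_div_iff₀ hb0]; nlinarith)
        | (rw [div_le_iff₀ hb0]; nlinarith)

set_option maxHeartbeats 1600000 in
/-- for `u n = a (k n) * v n` with `k n → ∞`, `b (k n + 1) ∤ v n`, and a
subsequence `(s i)` with `a (k (s (i+1))) ≥ 8 u (s i)`, there are integers `m t` with
`1 < m t ≤ b t` such that the point `x` with canonical digits `c t = ⌊b t / m t⌋` for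
`t ∈ {k (s i) + 1 : i ∈ ℕ}` and `c t = 0` otherwise satisfies `x ∉ t_{(u n)}(𝕋)`. -/
theorem exists_digits_not_mem_charSub (a : ℕ → ℕ) (ha : IsArithSeq a)
    (u : ℕ → ℕ) (hu : StrictMono u) (hupos : ∀ n, 0 < u n)
    (k v : ℕ → ℕ) (huv : ∀ n, u n = a (k n) * v n)
    (hk : Tendsto k atTop atTop)
    (hndvd : ∀ n, ¬ (ratios a (k n + 1)) ∣ v n)
    (s : ℕ → ℕ) (hs : StrictMono s)
    (hgap : ∀ i, 8 * u (s i) ≤ a (k (s (i + 1)))) :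
    ∃ m : ℕ → ℕ,
      (∀ t ∈ {t : ℕ | ∃ i, t = k (s i) + 1}, 1 < m t ∧ m t ≤ ratios a t) ∧
      (↑(∑' n : ℕ,
          (({t : ℕ | ∃ i, t = k (s i) + 1}.indicator (fun t => ratios a t / m t) n : ℕ) : ℝ) /
            (a n : ℝ)) : AddCircle (1 : ℝ)) ∉ charSub (fun n => (u n : ℤ)) := by
  classical
  obtain ⟨ha0, hlt, hdvd⟩ := ha
  have haSM : StrictMono a := strictMono_nat_of_lt_succ hlt
  have hapos : ∀ n, 1 ≤ a n := fun n => ha0 ▸ haSM.monotone (Nat.zero_le n)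
  have hdvd' : ∀ p q : ℕ, p ≤ q → a p ∣ a q := by
    intro p q h
    induction q with
    | zero => rw [Nat.le_zero.mp h]
    | succ q ih =>
      by_cases h' : p ≤ q
      · exact (ih h').trans (hdvd q)
      · have : p = q + 1 := by omega
        rw [this]
  have hrat : ∀ t, a t * ratios a (t + 1) = a (t + 1) := by
    intro t
    have h1 : ratios a (t + 1) = a (t + 1) / a t := by simp [ratios]
    rw [h1]
    exact Nat.mul_div_cancel' (hdvd t)
  have hb2 : ∀ t, 2 ≤ ratios a (t + 1) := by
    intro t
    have h := hrat t
    have h2 := hlt t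
    have h3 := hapos t
    nlinarith
  -- basic facts about u, v, k
  have hV1 : ∀ n, 1 ≤ v n := by
    intro n
    by_contra hcon
    push_neg at hcon
    have hv0 : v n = 0 := by omega
    have := huv n
    rw [hv0, Nat.mul_zero] at this
    have := hupos n
    omega
  have hUa : ∀ n, a (k n) ≤ u n := by
    intro n
    rw [huv n]
    exact Nat.le_mul_of_pos_right _ (hV1 n)
  have hKlt : ∀ i, k (s i) < k (s (i + 1)) := by
    intro i
    have h8 : a (k (s i)) < a (k (s (i + 1))) := by
      have h1 := hUa (s i)
      have h2 := hupos (s i)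
      have h3 := hgap i
      omega
    exact haSM.lt_iff_lt.mp h8
  have hKmono : StrictMono (fun i => k (s i)) := strictMono_nat_of_lt_succ hKlt
  -- choose the m's
  have hBpos : ∀ i, 2 ≤ ratios a (k (s i) + 1) := fun i => hb2 (k (s i))
  have hw1 : ∀ i, 1 ≤ v (s i) % ratios a (k (s i) + 1) := by
    intro i
    rcases Nat.eq_zero_or_pos (v (s i) % ratios a (k (s i) + 1)) with h | h
    · exact absurd (Nat.dvd_of_mod_eq_zero h) (hndvd (s i))
    · exact h
  have hw2 : ∀ i, v (s i) % ratios a (k (s i) + 1) < ratios a (k (s i) + 1) :=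
    fun i => Nat.mod_lt _ (by have := hBpos i; omega)
  have hkey : ∀ i, ∃ m : ℕ, 1 < m ∧ m ≤ ratios a (k (s i) + 1) ∧ ∃ z : ℤ,
      (1/4 : ℝ) ≤ ((v (s i) % ratios a (k (s i) + 1) *
          (ratios a (k (s i) + 1) / m) : ℕ) : ℝ) / (ratios a (k (s i) + 1)) - z ∧
      ((v (s i) % ratios a (k (s i) + 1) *
          (ratios a (k (s i) + 1) / m) : ℕ) : ℝ) / (ratios a (k (s i) + 1)) - z ≤ 3/4 :=
    fun i => key_m _ _ (hBpos i) (hw1 i) (hw2 i)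
  choose M hM1 hM2 Z hZ1 hZ2 using hkey
  set mf : ℕ → ℕ := fun t => if h : ∃ i, t = k (s i) + 1 then M h.choose else 2 with hmf
  have hmT : ∀ i, mf (k (s i) + 1) = M i := by
    intro i
    have hex : ∃ j, k (s i) + 1 = k (s j) + 1 := ⟨i, rfl⟩
    have he : hex.choose = i := by
      have h2 := hex.choose_spec
      exact hKmono.injective (show k (s hex.choose) = k (s i) by omega)
    simp only [hmf]
    rw [dif_pos hex, he]
  refine ⟨mf, ?_, ?_⟩
  · rintro t ⟨i, rfl⟩
    rw [hmT i]
    exact ⟨hM1 i, hM2 i⟩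
  · intro hmem
    rw [charSub, Set.mem_setOf_eq] at hmem
    set S : Set ℕ := {t : ℕ | ∃ i, t = k (s i) + 1} with hS
    set f : ℕ → ℝ :=
      fun n => ((S.indicator (fun t => ratios a t / mf t) n : ℕ) : ℝ) / (a n : ℝ) with hfdef
    have hfT : ∀ j, f (k (s j) + 1) =
        ((ratios a (k (s j) + 1) / M j : ℕ) : ℝ) / (a (k (s j) + 1) : ℝ) := by
      intro j
      simp only [hfdef]
      rw [Set.indicator_of_mem (show k (s j) + 1 ∈ S from ⟨j, rfl⟩), hmT j]
    have hfnn : ∀ n, 0 ≤ f n := by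
      intro n; rw [hfdef]; positivity
    have ha8 : ∀ j, 8 ^ j ≤ a (k (s j)) := by
      intro j
      induction j with
      | zero => simpa using hapos (k (s 0))
      | succ j ih =>
        calc 8 ^ (j+1) = 8 * 8 ^ j := by ring
        _ ≤ 8 * a (k (s j)) := Nat.mul_le_mul_left 8 ih
        _ ≤ 8 * u (s j) := Nat.mul_le_mul_left 8 (hUa (s j))
        _ ≤ a (k (s (j+1))) := hgap j
    have hgrow : ∀ i r, 8 ^ (r+1) * u (s i) ≤ a (k (s (i+1+r))) := by
      intro i r
      induction r with
      | zero => simpa using hgap i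
      | succ r ih =>
        have h3 : i+1+(r+1) = (i+1+r)+1 := by omega
        rw [h3]
        calc 8 ^ (r+1+1) * u (s i) = 8 * (8 ^ (r+1) * u (s i)) := by ring
        _ ≤ 8 * a (k (s (i+1+r))) := Nat.mul_le_mul_left 8 ih
        _ ≤ 8 * u (s (i+1+r)) := Nat.mul_le_mul_left 8 (hUa (s (i+1+r)))
        _ ≤ a (k (s (i+1+r+1))) := hgap (i+1+r)
    have hcB : ∀ j, (ratios a (k (s j) + 1) / M j) * 2 ≤ ratios a (k (s j) + 1) := by
      intro j
      calc (ratios a (k (s j) + 1) / M j) * 2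
          ≤ (ratios a (k (s j) + 1) / 2) * 2 :=
            Nat.mul_le_mul_right 2 (Nat.div_le_div_left (hM1 j) (by norm_num))
      _ ≤ _ := Nat.div_mul_le_self _ _
    have haT : ∀ j, a (k (s j) + 1) = a (k (s j)) * ratios a (k (s j) + 1) :=
      fun j => (hrat (k (s j))).symm
    have haKpos : ∀ j, (0:ℝ) < (a (k (s j)) : ℝ) := by
      intro j
      exact_mod_cast Nat.lt_of_lt_of_le Nat.zero_lt_one (hapos _)
    have hBr : ∀ j, (0:ℝ) < (ratios a (k (s j) + 1) : ℝ) := by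
      intro j
      have := hBpos j
      exact_mod_cast (by omega : 0 < ratios a (k (s j) + 1))
    have hgle : ∀ j, f (k (s j) + 1) ≤ 1 / (2 * (a (k (s j)) : ℝ)) := by
      intro j
      rw [hfT j, haT j]
      have hp1 : (0:ℝ) < 2 * (a (k (s j)) : ℝ) := by
        have := haKpos j; linarith
      have hp2 : (0:ℝ) < ((a (k (s j)) * ratios a (k (s j) + 1) : ℕ) : ℝ) := by
        have h := Nat.mul_pos (Nat.lt_of_lt_of_le Nat.zero_lt_one (hapos (k (s j))))
          (show 0 < ratios a (k (s j) + 1) by have := hBpos j; omega)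
        exact_mod_cast h
      rw [div_le_div_iff₀ hp2 hp1]
      push_cast
      have h3 : ((ratios a (k (s j) + 1) / M j : ℕ) : ℝ) * 2 ≤ (ratios a (k (s j) + 1) : ℝ) := by
        exact_mod_cast hcB j
      nlinarith [haKpos j, hBr j]
    have hgle8 : ∀ j, f (k (s j) + 1) ≤ (1/8 : ℝ) ^ j := by
      intro j
      have h8a : (8:ℝ) ^ j ≤ (a (k (s j)) : ℝ) := by exact_mod_cast ha8 j
      have h8p : (0:ℝ) < 8 ^ j := by positivity
      calc f (k (s j) + 1) ≤ 1 / (2 * (a (k (s j)) : ℝ)) := hgle j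
      _ ≤ 1 / ((8:ℝ) ^ j) := by
          apply one_div_le_one_div_of_le h8p
          linarith
      _ = (1/8 : ℝ) ^ j := by rw [one_div_pow]
    have hgsum : Summable (fun j => f (k (s j) + 1)) :=
      Summable.of_nonneg_of_le (fun j => hfnn _) hgle8
        (summable_geometric_of_lt_one (by norm_num) (by norm_num))
    have hTinj : Function.Injective (fun j => k (s j) + 1) := by
      intro p q h
      simp only at h
      exact hKmono.injective (show k (s p) = k (s q) by omega)
    have hsupp : Function.support f ⊆ Set.range (fun j => k (s j) + 1) := by
      intro n hn
      rw [Function.mem_support] at hn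
      by_contra hcon
      apply hn
      have hnS : n ∉ S := by
        rintro ⟨i, rfl⟩
        exact hcon ⟨i, rfl⟩
      simp only [hfdef]
      rw [Set.indicator_of_notMem hnS]
      simp
    have hXeq : ∑' n, f n = ∑' j, f (k (s j) + 1) := (hTinj.tsum_eq hsupp).symm
    -- key lower bound along the subsequence
    have hmain : ∀ i, (5/28 : ℝ) ≤
        ‖((u (s i) : ℤ) • (((∑' n, f n : ℝ)) : AddCircle (1:ℝ)))‖ := by
      intro i
      set τ : ℝ := ∑' r, f (k (s (r + (i+1))) + 1) with hτ
      have hτsum : Summable (fun r => f (k (s (r + (i+1))) + 1)) :=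
        (summable_nat_add_iff (f := fun j => f (k (s j) + 1)) (i+1)).2 hgsum
      have hsplit : ∑' n, f n = (∑ j ∈ Finset.range (i+1), f (k (s j) + 1)) + τ := by
        rw [hXeq, hτ]
        exact (Summable.sum_add_tsum_nat_add (f := fun j => f (k (s j) + 1)) (i+1) hgsum).symm
      have hτ0 : 0 ≤ τ := tsum_nonneg fun r => hfnn _
      have hupos' : (0:ℝ) < u (s i) := by exact_mod_cast hupos (s i)
      have hτle : τ ≤ 1 / (14 * (u (s i) : ℝ)) := by
        have hle : ∀ r : ℕ, f (k (s (r + (i+1))) + 1) ≤ (1/(16 * (u (s i) : ℝ))) * (1/8)^r := by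
          intro r
          have h2 : r + (i+1) = i+1+r := by omega
          rw [h2]
          have h3 : (8:ℝ)^(r+1) * (u (s i) : ℝ) ≤ (a (k (s (i+1+r))) : ℝ) := by
            exact_mod_cast hgrow i r
          have h8p : (0:ℝ) < 8 ^ (r+1) := by positivity
          calc f (k (s (i+1+r)) + 1) ≤ 1 / (2 * (a (k (s (i+1+r))) : ℝ)) := hgle _
          _ ≤ 1 / (2 * ((8:ℝ)^(r+1) * (u (s i) : ℝ))) := by
              apply one_div_le_one_div_of_le (by positivity)
              nlinarith
          _ = (1/(16 * (u (s i) : ℝ))) * (1/8)^r := by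
              rw [one_div_pow]
              rw [pow_succ]
              field_simp
              ring
        have hsum2 : Summable (fun r : ℕ => (1/(16 * (u (s i) : ℝ))) * (1/8 : ℝ)^r) :=
          (summable_geometric_of_lt_one (by norm_num) (by norm_num)).mul_left _
        calc τ ≤ ∑' r, (1/(16 * (u (s i) : ℝ))) * (1/8 : ℝ)^r := Summable.tsum_le_tsum hle hτsum hsum2
        _ = (1/(16 * (u (s i) : ℝ))) * ∑' r : ℕ, (1/8 : ℝ)^r := tsum_mul_left
        _ = (1/(16 * (u (s i) : ℝ))) * (1 - 1/8)⁻¹ := by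
            rw [tsum_geometric_of_lt_one (by norm_num) (by norm_num)]
        _ = 1 / (14 * (u (s i) : ℝ)) := by
            rw [show ((1:ℝ) - 1/8)⁻¹ = 8/7 by norm_num]
            field_simp
            ring
      -- head terms are integers
      have hint : ∀ j, j < i → (u (s i) : ℝ) * f (k (s j) + 1) =
          ((u (s i) / a (k (s j) + 1) * (ratios a (k (s j) + 1) / M j) : ℕ) : ℝ) := by
        intro j hj
        have hTle : k (s j) + 1 ≤ k (s i) := hKmono hj
        have hdvdU : a (k (s j) + 1) ∣ u (s i) := by
          refine dvd_trans (hdvd' _ _ hTle) ?_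
          rw [huv (s i)]
          exact dvd_mul_right _ _
        have hTpos : (0:ℝ) < (a (k (s j) + 1) : ℝ) := by
          exact_mod_cast Nat.lt_of_lt_of_le Nat.zero_lt_one (hapos _)
        have hcanc : ((u (s i) / a (k (s j) + 1) : ℕ) : ℝ) * (a (k (s j) + 1) : ℝ)
            = (u (s i) : ℝ) := by
          exact_mod_cast Nat.div_mul_cancel hdvdU
        rw [hfT j]
        push_cast
        rw [← hcanc]
        field_simp
      -- main digit term
      have hmainterm : (u (s i) : ℝ) * f (k (s i) + 1) =
          ((ratios a (k (s i) + 1) / M i * (v (s i) / ratios a (k (s i) + 1)) : ℕ) : ℝ) +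
          ((v (s i) % ratios a (k (s i) + 1) * (ratios a (k (s i) + 1) / M i) : ℕ) : ℝ) /
            (ratios a (k (s i) + 1) : ℝ) := by
        rw [hfT i, haT i, huv (s i)]
        have hmod : (ratios a (k (s i) + 1) : ℝ) *
            ((v (s i) / ratios a (k (s i) + 1) : ℕ) : ℝ)
            + ((v (s i) % ratios a (k (s i) + 1) : ℕ) : ℝ) = (v (s i) : ℝ) := by
          exact_mod_cast Nat.div_add_mod (v (s i)) (ratios a (k (s i) + 1))
        have hV : (v (s i) : ℝ) = (ratios a (k (s i) + 1) : ℝ) *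
            ((v (s i) / ratios a (k (s i) + 1) : ℕ) : ℝ)
            + ((v (s i) % ratios a (k (s i) + 1) : ℕ) : ℝ) := hmod.symm
        push_cast
        rw [hV]
        have hK0 := haKpos i
        have hB0 := hBr i
        field_simp
      set N : ℤ := (∑ j ∈ Finset.range i,
            ((u (s i) / a (k (s j) + 1) * (ratios a (k (s j) + 1) / M j) : ℕ) : ℤ)) +
          ((ratios a (k (s i) + 1) / M i * (v (s i) / ratios a (k (s i) + 1)) : ℕ) : ℤ) + Z i
        with hN
      set ρ : ℝ := ((v (s i) % ratios a (k (s i) + 1) * (ratios a (k (s i) + 1) / M i) : ℕ) : ℝ) /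
          (ratios a (k (s i) + 1) : ℝ) - (Z i : ℝ) + (u (s i) : ℝ) * τ with hρ
      have hreal : (u (s i) : ℝ) * (∑' n, f n) = ρ + (N : ℝ) := by
        rw [hsplit, Finset.sum_range_succ, mul_add, mul_add, hmainterm]
        rw [Finset.mul_sum]
        rw [Finset.sum_congr rfl (fun j hj => hint j (Finset.mem_range.mp hj))]
        have hNr : (N : ℝ) = (∑ j ∈ Finset.range i,
            ((u (s i) / a (k (s j) + 1) * (ratios a (k (s j) + 1) / M j) : ℕ) : ℝ)) +
            ((ratios a (k (s i) + 1) / M i * (v (s i) / ratios a (k (s i) + 1)) : ℕ) : ℝ) +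
            (Z i : ℝ) := by
          rw [hN]
          simp only [Int.cast_add, Int.cast_sum, Int.cast_natCast]
        rw [hρ, hNr]
        ring
      have hcoe : ((u (s i) : ℤ) • (((∑' n, f n : ℝ)) : AddCircle (1:ℝ)))
          = ((ρ : ℝ) : AddCircle (1:ℝ)) := by
        rw [← AddCircle.coe_zsmul]
        have h1 : (u (s i) : ℤ) • (∑' n, f n : ℝ) = ρ + (N : ℝ) := by
          rw [zsmul_eq_mul]
          push_cast
          exact_mod_cast hreal
        rw [h1, AddCircle.coe_add]
        have h2 : (((N : ℝ)) : AddCircle (1:ℝ)) = 0 := by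
          rw [AddCircle.coe_eq_zero_iff]
          exact ⟨N, by simp⟩
        rw [h2, add_zero]
      rw [hcoe]
      have hτu : (u (s i) : ℝ) * τ ≤ 1/14 := by
        calc (u (s i) : ℝ) * τ ≤ (u (s i) : ℝ) * (1 / (14 * (u (s i) : ℝ))) :=
          mul_le_mul_of_nonneg_left hτle (le_of_lt hupos')
        _ = 1/14 := by field_simp
      have hρ1 : 1/4 ≤ ρ := by
        rw [hρ]
        have := hZ1 i
        nlinarith [mul_nonneg (le_of_lt hupos') hτ0]
      have hρ2 : ρ ≤ 23/28 := by
        rw [hρ]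
        have := hZ2 i
        linarith
      have hnorm : ‖((ρ : ℝ) : AddCircle (1:ℝ))‖ = |ρ - round ρ| := by
        rw [AddCircle.norm_eq]
        norm_num
      rw [hnorm]
      exact abs_sub_int_ge (round ρ) ρ hρ1 hρ2
    have htend : Tendsto (fun i => ((u (s i) : ℤ) • (((∑' n, f n : ℝ)) : AddCircle (1:ℝ))))
        atTop (𝓝 0) := hmem.comp hs.tendsto_atTop
    have hnorm0 := htend.norm
    rw [norm_zero] at hnorm0
    have hev := hnorm0.eventually (eventually_lt_nhds (show (0:ℝ) < 5/28 by norm_num))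
    obtain ⟨i, hi⟩ := hev.exists
    exact absurd (hmain i) (not_le.mpr hi)
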